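/- If S ⊆ 𝔽₂ⁿ has |S| = σ·2ⁿ with 0 < σ < 1/2, φ : S → 𝔽₂^N is a Freiman homomorphism (i.e. φ(x₁)+φ(x₂) = φ(x₃)+φ(x₄) whenever x₁,x₂,x₃,x₄ ∈ S satisfy x₁+x₂ = x₃+x₄), and f : 𝔽₂^{n+N} → ℝ is defined by f(x,y) := 1_S(x)·(-1)^{φ(x)·y}, then ‖f‖_{U³(𝔽₂^{n+N})} ≥ σ. -/

import Mathlib

noncomputable def gowersU3 {G : Type*} [AddCommGroup G] [Fintype G] (f : G → ℂ) : ℝ :=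
  ((∑ x : G, ∑ h₁ : G, ∑ h₂ : G, ∑ h₃ : G,
      f x * (starRingEnd ℂ) (f (x + h₁)) * (starRingEnd ℂ) (f (x + h₂)) *
        (starRingEnd ℂ) (f (x + h₃)) * f (x + h₁ + h₂) * f (x + h₁ + h₃) *
        f (x + h₂ + h₃) * (starRingEnd ℂ) (f (x + h₁ + h₂ + h₃))).re /
    (Fintype.card G : ℝ) ^ 4) ^ ((8 : ℝ)⁻¹)

set_option maxHeartbeats 2000000 in
theorem stmt0 (n N : ℕ) (σ : ℝ) (hσ0 : 0 < σ) (hσ1 : σ < 1 / 2)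
    (S : Finset (Fin n → ZMod 2))
    (hcard : (S.card : ℝ) = σ * 2 ^ n)
    (φ : (Fin n → ZMod 2) → (Fin N → ZMod 2))
    (hφ : ∀ x₁ ∈ S, ∀ x₂ ∈ S, ∀ x₃ ∈ S, ∀ x₄ ∈ S,
      x₁ + x₂ = x₃ + x₄ → φ x₁ + φ x₂ = φ x₃ + φ x₄)
    (f : (Fin n → ZMod 2) × (Fin N → ZMod 2) → ℂ)
    (hf : ∀ x y, f (x, y) = if x ∈ S then (-1 : ℂ) ^ (∑ i, φ x i * y i).val else 0) :
    σ ≤ gowersU3 f := by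
  classical
  have hchi : ∀ a b : ZMod 2, ((-1:ℂ))^((a+b).val) = (-1)^a.val * (-1)^b.val := by
    intro a b
    rw [ZMod.val_add, ← pow_add, neg_one_pow_eq_pow_mod_two (n := a.val + b.val)]
  have hself : ∀ v : Fin N → ZMod 2, v + v = 0 := by
    intro v; funext i
    have : ∀ z : ZMod 2, z + z = 0 := by decide
    exact this (v i)
  have hquad : ∀ a b c d, a ∈ S → b ∈ S → c ∈ S → d ∈ S → a + b = c + d →
      φ a + φ b + φ c + φ d = 0 := by
    intro a b c d ha hb hc hd h
    have h2 := hφ a ha b hb c hc d hd h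
    linear_combination h2 + hself (φ c) + hself (φ d)
  have hDsum : ∀ a b c d (v : Fin N → ZMod 2), φ a + φ b + φ c + φ d = 0 →
      (∑ i, φ a i * v i) + (∑ i, φ b i * v i) + (∑ i, φ c i * v i) + (∑ i, φ d i * v i) = 0 := by
    intro a b c d v h
    rw [← Finset.sum_add_distrib, ← Finset.sum_add_distrib, ← Finset.sum_add_distrib]
    refine Finset.sum_eq_zero fun i _ => ?_
    have h' : φ a i + φ b i + φ c i + φ d i = 0 := by
      have := congrFun h i; simpa using this
    linear_combination v i * h'
  have hEzero : ∀ (x a₁ a₂ a₃ : Fin n → ZMod 2) (y b₁ b₂ b₃ : Fin N → ZMod 2),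
      x ∈ S → x + a₁ ∈ S → x + a₂ ∈ S → x + a₃ ∈ S → x + a₁ + a₂ ∈ S → x + a₁ + a₃ ∈ S →
      x + a₂ + a₃ ∈ S → x + a₁ + a₂ + a₃ ∈ S →
      (∑ i, φ x i * y i) + (∑ i, φ (x + a₁) i * (y + b₁) i) + (∑ i, φ (x + a₂) i * (y + b₂) i)
        + (∑ i, φ (x + a₃) i * (y + b₃) i) + (∑ i, φ (x + a₁ + a₂) i * (y + b₁ + b₂) i)
        + (∑ i, φ (x + a₁ + a₃) i * (y + b₁ + b₃) i) + (∑ i, φ (x + a₂ + a₃) i * (y + b₂ + b₃) i)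
        + (∑ i, φ (x + a₁ + a₂ + a₃) i * (y + b₁ + b₂ + b₃) i) = 0 := by
    intro x a₁ a₂ a₃ y b₁ b₂ b₃ h0 h1 h2 h3 h4 h5 h6 h7
    have hexp : ∀ (u : Fin n → ZMod 2) (v w : Fin N → ZMod 2),
        (∑ i, φ u i * (v + w) i) = (∑ i, φ u i * v i) + (∑ i, φ u i * w i) := by
      intro u v w
      simp [Pi.add_apply, mul_add, Finset.sum_add_distrib]
    simp only [hexp]
    have g1 := hDsum x (x+a₁+a₂) (x+a₁) (x+a₂) y
      (hquad x (x+a₁+a₂) (x+a₁) (x+a₂) h0 h4 h1 h2 (by ring))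
    have g2 := hDsum (x+a₃) (x+a₁+a₂+a₃) (x+a₁+a₃) (x+a₂+a₃) y
      (hquad _ _ _ _ h3 h7 h5 h6 (by ring))
    have g3 := hDsum (x+a₁) (x+a₁+a₂+a₃) (x+a₁+a₂) (x+a₁+a₃) b₁
      (hquad _ _ _ _ h1 h7 h4 h5 (by ring))
    have g4 := hDsum (x+a₂) (x+a₁+a₂+a₃) (x+a₁+a₂) (x+a₂+a₃) b₂
      (hquad _ _ _ _ h2 h7 h4 h6 (by ring))
    have g5 := hDsum (x+a₃) (x+a₁+a₂+a₃) (x+a₁+a₃) (x+a₂+a₃) b₃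
      (hquad _ _ _ _ h3 h7 h5 h6 (by ring))
    linear_combination g1 + g2 + g3 + g4 + g5
  set Iv : (Fin n → ZMod 2) → ℝ := fun u => if u ∈ S then (1:ℝ) else 0 with hIv
  have hform : ∀ u v, f (u, v) = (Iv u : ℂ) * (-1)^((∑ i, φ u i * v i).val) := by
    intro u v; rw [hf, hIv]; split_ifs with h <;> simp [h]
  have hconj : ∀ (r : ℝ) (k : ℕ), (starRingEnd ℂ) ((r : ℂ) * (-1)^k) = (r : ℂ) * (-1)^k := by
    intro r k; simp [map_mul, map_pow]
  have hkey : ∀ (x a₁ a₂ a₃ : Fin n → ZMod 2) (y b₁ b₂ b₃ : Fin N → ZMod 2),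
      ((Iv x : ℂ) * (-1)^((∑ i, φ x i * y i).val)) *
      ((Iv (x+a₁) : ℂ) * (-1)^((∑ i, φ (x+a₁) i * (y+b₁) i).val)) *
      ((Iv (x+a₂) : ℂ) * (-1)^((∑ i, φ (x+a₂) i * (y+b₂) i).val)) *
      ((Iv (x+a₃) : ℂ) * (-1)^((∑ i, φ (x+a₃) i * (y+b₃) i).val)) *
      ((Iv (x+a₁+a₂) : ℂ) * (-1)^((∑ i, φ (x+a₁+a₂) i * (y+b₁+b₂) i).val)) *
      ((Iv (x+a₁+a₃) : ℂ) * (-1)^((∑ i, φ (x+a₁+a₃) i * (y+b₁+b₃) i).val)) *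
      ((Iv (x+a₂+a₃) : ℂ) * (-1)^((∑ i, φ (x+a₂+a₃) i * (y+b₂+b₃) i).val)) *
      ((Iv (x+a₁+a₂+a₃) : ℂ) * (-1)^((∑ i, φ (x+a₁+a₂+a₃) i * (y+b₁+b₂+b₃) i).val))
      = ((Iv x * Iv (x+a₁) * Iv (x+a₂) * Iv (x+a₃) * Iv (x+a₁+a₂) * Iv (x+a₁+a₃) *
          Iv (x+a₂+a₃) * Iv (x+a₁+a₂+a₃) : ℝ) : ℂ) := by
    intro x a₁ a₂ a₃ y b₁ b₂ b₃
    by_cases h0 : x ∈ S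
    swap; · simp [hIv, h0]
    by_cases h1 : x + a₁ ∈ S
    swap; · simp [hIv, h1]
    by_cases h2 : x + a₂ ∈ S
    swap; · simp [hIv, h2]
    by_cases h3 : x + a₃ ∈ S
    swap; · simp [hIv, h3]
    by_cases h4 : x + a₁ + a₂ ∈ S
    swap; · simp [hIv, h4]
    by_cases h5 : x + a₁ + a₃ ∈ S
    swap; · simp [hIv, h5]
    by_cases h6 : x + a₂ + a₃ ∈ S
    swap; · simp [hIv, h6]
    by_cases h7 : x + a₁ + a₂ + a₃ ∈ S
    swap; · simp [hIv, h7]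
    have hone : ∀ u, u ∈ S → (Iv u : ℂ) = 1 := by
      intro u hu; rw [hIv]; simp [hu]
    rw [hone x h0, hone _ h1, hone _ h2, hone _ h3, hone _ h4, hone _ h5, hone _ h6, hone _ h7]
    have honeR : ∀ u, u ∈ S → Iv u = 1 := by
      intro u hu; rw [hIv]; simp [hu]
    rw [honeR x h0, honeR _ h1, honeR _ h2, honeR _ h3, honeR _ h4, honeR _ h5, honeR _ h6,
      honeR _ h7]
    simp only [one_mul, mul_one, Complex.ofReal_one]
    rw [← hchi, ← hchi, ← hchi, ← hchi, ← hchi, ← hchi, ← hchi]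
    rw [hEzero x a₁ a₂ a₃ y b₁ b₂ b₃ h0 h1 h2 h3 h4 h5 h6 h7]
    simp
  have hcardY : Fintype.card (Fin N → ZMod 2) = 2^N := by simp
  set Q : ℝ := ∑ x, ∑ a₁, ∑ a₂, ∑ a₃, Iv x * Iv (x+a₁) * Iv (x+a₂) * Iv (x+a₃) *
      Iv (x+a₁+a₂) * Iv (x+a₁+a₃) * Iv (x+a₂+a₃) * Iv (x+a₁+a₂+a₃) with hQdef
  have hT : (∑ x : (Fin n → ZMod 2) × (Fin N → ZMod 2), ∑ h₁, ∑ h₂, ∑ h₃,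
      f x * (starRingEnd ℂ) (f (x + h₁)) * (starRingEnd ℂ) (f (x + h₂)) *
        (starRingEnd ℂ) (f (x + h₃)) * f (x + h₁ + h₂) * f (x + h₁ + h₃) *
        f (x + h₂ + h₃) * (starRingEnd ℂ) (f (x + h₁ + h₂ + h₃)))
      = (((2:ℝ)^(4*N) * Q : ℝ) : ℂ) := by
    rw [hQdef]
    simp only [Fintype.sum_prod_type, Prod.mk_add_mk, hform, hconj]
    simp only [hkey]
    simp only [Finset.sum_const, Finset.card_univ, nsmul_eq_mul, hcardY, ← Finset.mul_sum]
    push_cast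
    ring
  have hA : (∑ u, Iv u) = σ * 2^n := by
    rw [hIv]
    rw [Finset.sum_boole]
    simpa using hcard
  have hshift : ∀ x : Fin n → ZMod 2, (∑ a, Iv (x + a)) = σ * 2^n := fun x =>
    (Fintype.sum_equiv (Equiv.addLeft x) _ _ (fun a => rfl)).trans hA
  have hF1sum : (∑ a, ∑ x, Iv x * Iv (x + a)) = (σ * 2^n)^2 := by
    rw [Finset.sum_comm]
    have h1 : ∀ x : Fin n → ZMod 2, (∑ a, Iv x * Iv (x + a)) = Iv x * (σ * 2^n) := by
      intro x
      rw [← Finset.mul_sum, hshift x]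
    simp only [h1]
    rw [← Finset.sum_mul, hA]; ring
  have hG2 : ∀ a₁ : Fin n → ZMod 2,
      (∑ a₂, ∑ x, Iv x * Iv (x+a₁) * Iv (x+a₂) * Iv (x+a₁+a₂))
        = (∑ x, Iv x * Iv (x+a₁))^2 := by
    intro a₁
    rw [Finset.sum_comm]
    have h1 : ∀ x : Fin n → ZMod 2, (∑ a₂, Iv x * Iv (x+a₁) * Iv (x+a₂) * Iv (x+a₁+a₂))
        = Iv x * Iv (x+a₁) * ∑ u, Iv u * Iv (u+a₁) := by
      intro x
      have hs : (∑ a₂, Iv (x+a₂) * Iv (x+a₂+a₁)) = ∑ u, Iv u * Iv (u+a₁) :=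
        Fintype.sum_equiv (Equiv.addLeft x) _ _ (fun a => rfl)
      rw [← hs, Finset.mul_sum]
      refine Finset.sum_congr rfl fun a₂ _ => ?_
      have e1 : x + a₁ + a₂ = x + a₂ + a₁ := by ring
      rw [e1]; ring
    simp only [h1]
    rw [← Finset.sum_mul]
    ring
  have hQsplit : Q = ∑ a₁, ∑ a₂, (∑ x, Iv x * Iv (x+a₁) * Iv (x+a₂) * Iv (x+a₁+a₂))^2 := by
    rw [hQdef, Finset.sum_comm]
    refine Finset.sum_congr rfl fun a₁ _ => ?_
    rw [Finset.sum_comm]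
    refine Finset.sum_congr rfl fun a₂ _ => ?_
    have h1 : ∀ x : Fin n → ZMod 2, (∑ a₃, Iv x * Iv (x+a₁) * Iv (x+a₂) * Iv (x+a₃) *
        Iv (x+a₁+a₂) * Iv (x+a₁+a₃) * Iv (x+a₂+a₃) * Iv (x+a₁+a₂+a₃))
        = Iv x * Iv (x+a₁) * Iv (x+a₂) * Iv (x+a₁+a₂) *
          ∑ u, Iv u * Iv (u+a₁) * Iv (u+a₂) * Iv (u+a₁+a₂) := by
      intro x
      have hs : (∑ a₃, Iv (x+a₃) * Iv (x+a₃+a₁) * Iv (x+a₃+a₂) * Iv (x+a₃+a₁+a₂))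
          = ∑ u, Iv u * Iv (u+a₁) * Iv (u+a₂) * Iv (u+a₁+a₂) :=
        Fintype.sum_equiv (Equiv.addLeft x) _ _ (fun a => rfl)
      rw [← hs, Finset.mul_sum]
      refine Finset.sum_congr rfl fun a₃ _ => ?_
      have e1 : x + a₁ + a₃ = x + a₃ + a₁ := by ring
      have e2 : x + a₂ + a₃ = x + a₃ + a₂ := by ring
      have e3 : x + a₁ + a₂ + a₃ = x + a₃ + a₁ + a₂ := by ring
      rw [e1, e2, e3]; ring
    simp only [h1]
    rw [← Finset.sum_mul]
    ring
  have hcardX : Fintype.card (Fin n → ZMod 2) = 2^n := by simp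
  -- Cauchy-Schwarz 1
  have hcs1 : ((σ * 2^n)^2)^2 ≤ (2^n : ℝ) * ∑ a, (∑ x, Iv x * Iv (x + a))^2 := by
    have h := sq_sum_le_card_mul_sum_sq (s := (Finset.univ : Finset (Fin n → ZMod 2)))
      (f := fun a => ∑ x, Iv x * Iv (x + a))
    rw [hF1sum] at h
    simpa [Finset.card_univ, hcardX] using h
  -- Cauchy-Schwarz 2
  have hcs2 : (∑ a₁, ∑ a₂, ∑ x, Iv x * Iv (x+a₁) * Iv (x+a₂) * Iv (x+a₁+a₂))^2
      ≤ ((2^n : ℝ) * 2^n) * Q := by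
    have h := sq_sum_le_card_mul_sum_sq
      (s := (Finset.univ : Finset ((Fin n → ZMod 2) × (Fin n → ZMod 2))))
      (f := fun p => ∑ x, Iv x * Iv (x+p.1) * Iv (x+p.2) * Iv (x+p.1+p.2))
    rw [hQsplit]
    simpa [Fintype.sum_prod_type, Finset.card_univ, hcardX] using h
  have hsum2 : (∑ a₁, ∑ a₂, ∑ x, Iv x * Iv (x+a₁) * Iv (x+a₂) * Iv (x+a₁+a₂))
      = ∑ a, (∑ x, Iv x * Iv (x + a))^2 := by
    refine Finset.sum_congr rfl fun a₁ _ => ?_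
    exact hG2 a₁
  rw [hsum2] at hcs2
  set q1 : ℝ := ∑ a, (∑ x, Iv x * Iv (x + a))^2 with hq1def
  have hq1nn : 0 ≤ q1 := Finset.sum_nonneg fun _ _ => sq_nonneg _
  have ht : (0:ℝ) < 2^n := by positivity
  have hQlb : σ^8 * ((2:ℝ)^n)^4 ≤ Q := by
    nlinarith [mul_le_mul hcs1 hcs1 (by positivity) (le_trans (by positivity) hcs1),
      mul_le_mul_of_nonneg_left hcs2 (le_of_lt (by positivity : (0:ℝ) < (2^n:ℝ)*2^n)),
      sq_nonneg q1, hq1nn, ht, pow_pos ht 4, pow_pos hσ0 8]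
  -- endgame
  unfold gowersU3
  rw [hT, Complex.ofReal_re]
  have hcG : Fintype.card ((Fin n → ZMod 2) × (Fin N → ZMod 2)) = 2^n * 2^N := by simp
  rw [hcG]
  have hfrac : ((2:ℝ)^(4*N) * Q) / ((((2^n * 2^N : ℕ)) : ℝ))^4 = Q / ((2:ℝ)^n)^4 := by
    push_cast
    rw [div_eq_div_iff (by positivity) (by positivity)]
    ring
  rw [hfrac]
  have h8 : σ^8 ≤ Q / ((2:ℝ)^n)^4 := by
    rw [le_div_iff₀ (by positivity)]
    exact hQlb
  calc σ = (σ^(8:ℕ)) ^ ((8:ℝ)⁻¹) := by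
        rw [← Real.rpow_natCast σ 8, ← Real.rpow_mul hσ0.le]
        norm_num
    _ ≤ (Q / ((2:ℝ)^n)^4) ^ ((8:ℝ)⁻¹) := Real.rpow_le_rpow (by positivity) h8 (by norm_num)
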